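/- Let a, b, c, ω, t be real numbers, set θ := ω·t, and let U := Matrix.exp ℂ ((θ/2) • (Complex.I • Y)) ∈ Matrix (Fin 2) (Fin 2) ℂ. Then U * (a•1 + b•X + c•Z) * Matrix.exp ℂ (−(θ/2) • (Complex.I • Y)) = a•1 + (b·cos θ − c·sin θ)•X + (b·sin θ + c·cos θ)•Z. -/

import Mathlib

open scoped ComplexOrder

/-- The Pauli matrix `X`. -/
def pauliX : Matrix (Fin 2) (Fin 2) ℂ := !![0, 1; 1, 0]

/-- The Pauli matrix `Y`. -/
def pauliY : Matrix (Fin 2) (Fin 2) ℂ := !![0, -Complex.I; Complex.I, 0]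

/-- The Pauli matrix `Z`. -/
def pauliZ : Matrix (Fin 2) (Fin 2) ℂ := !![1, 0; 0, -1]

noncomputable def rotU : (Matrix (Fin 2) (Fin 2) ℂ)ˣ where
  val := !![1, 1; Complex.I, -Complex.I]
  inv := !![1/2, -Complex.I/2; 1/2, Complex.I/2]
  val_inv := by
    ext i j
    fin_cases i <;> fin_cases j <;>
      simp [Matrix.mul_apply, Fin.sum_univ_two, Complex.ext_iff] <;> norm_num
  inv_val := by
    ext i j
    fin_cases i <;> fin_cases j <;>
      simp [Matrix.mul_apply, Fin.sum_univ_two, Complex.ext_iff] <;> norm_num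

lemma exp_sIY (s : ℂ) :
    NormedSpace.exp (s • (Complex.I • pauliY)) =
      !![Complex.cos s, Complex.sin s; -Complex.sin s, Complex.cos s] := by
  have hM : s • (Complex.I • pauliY) =
      (rotU : Matrix (Fin 2) (Fin 2) ℂ) *
        Matrix.diagonal ![s * Complex.I, -(s * Complex.I)] * (↑rotU⁻¹ : Matrix (Fin 2) (Fin 2) ℂ) := by
    ext i j
    fin_cases i <;> fin_cases j <;>
      simp [rotU, pauliY, Matrix.mul_apply, Fin.sum_univ_two, Matrix.diagonal,
        Matrix.vecHead, Matrix.vecTail] <;>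
      first
        | ring1
        | (ring_nf; simp [Complex.I_sq]; try ring1)
  rw [hM, Matrix.exp_units_conj, Matrix.exp_diagonal]
  ext i j
  fin_cases i <;> fin_cases j <;>
    simp [rotU, Matrix.mul_apply, Fin.sum_univ_two, Matrix.diagonal, ← Complex.exp_eq_exp_ℂ,
      Matrix.vecHead, Matrix.vecTail, Complex.cos, Complex.sin] <;>
    first
      | ring1
      | (ring_nf; simp [Complex.I_sq]; try ring1)

theorem rebit_rotation (a b c ω t : ℝ) (θ : ℝ) (hθ : θ = ω * t) :
    NormedSpace.exp (((θ : ℂ) / 2) • (Complex.I • pauliY)) *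
        ((a : ℂ) • (1 : Matrix (Fin 2) (Fin 2) ℂ) + (b : ℂ) • pauliX + (c : ℂ) • pauliZ) *
        NormedSpace.exp ((-((θ : ℂ) / 2)) • (Complex.I • pauliY)) =
      (a : ℂ) • (1 : Matrix (Fin 2) (Fin 2) ℂ) +
        ((b * Real.cos θ - c * Real.sin θ : ℝ) : ℂ) • pauliX +
        ((b * Real.sin θ + c * Real.cos θ : ℝ) : ℂ) • pauliZ := by
  rw [exp_sIY, exp_sIY]
  have pyth : Complex.sin ((θ : ℂ) / 2) ^ 2 + Complex.cos ((θ : ℂ) / 2) ^ 2 = 1 :=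
    Complex.sin_sq_add_cos_sq _
  have hc : Complex.cos (θ : ℂ) =
      Complex.cos ((θ : ℂ) / 2) * Complex.cos ((θ : ℂ) / 2) -
        Complex.sin ((θ : ℂ) / 2) * Complex.sin ((θ : ℂ) / 2) := by
    have h := Complex.cos_add ((θ : ℂ) / 2) ((θ : ℂ) / 2)
    rw [show (θ : ℂ) / 2 + (θ : ℂ) / 2 = (θ : ℂ) by ring] at h
    exact h
  have hs : Complex.sin (θ : ℂ) =
      Complex.sin ((θ : ℂ) / 2) * Complex.cos ((θ : ℂ) / 2) +
        Complex.cos ((θ : ℂ) / 2) * Complex.sin ((θ : ℂ) / 2) := by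
    have h := Complex.sin_add ((θ : ℂ) / 2) ((θ : ℂ) / 2)
    rw [show (θ : ℂ) / 2 + (θ : ℂ) / 2 = (θ : ℂ) by ring] at h
    exact h
  ext i j
  fin_cases i <;> fin_cases j <;>
    simp [pauliX, pauliZ, Matrix.mul_apply, Fin.sum_univ_two, Matrix.one_apply,
      Matrix.vecHead, Matrix.vecTail, Matrix.vecMul, dotProduct,
      Complex.ofReal_cos, Complex.ofReal_sin, hc, hs] <;>
    first
      | ring1
      | linear_combination (a : ℂ) * pyth
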